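/- arXiv:2011.05359 — 3 statements merged into one kernel-verified Lean document; each statement's English description precedes it below -/
import Mathlib

section
/- Suppose $1/n\ll\varepsilon$ and $d\geq n^{-\varepsilon}$. Let $G$ be an $(\varepsilon,d)$-super-regular bipartite graph with parts $A,B$, $|A|=|B|=n$, such that for all but at most $n^{3/2}$ pairs $\{a,a'\}\in\binom{A}{2}$ we have $|N_G(a)\cap N_G(a')|\leq(1+\varepsilon)d^2n$. Then for every $X\subseteq A$ and $Y\subseteq B$ with $n^{3/4+3\varepsilon}\leq|X|,|Y|\leq\varepsilon n$, we have $e_G(X,Y)\leq\varepsilon^{1/3}dn\max\{|X|,|Y|\}$. -/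
open Finset
open scoped Classical

variable {V : Type*} [Fintype V] [DecidableEq V]

/-- Number of edges of `G` between `X` and `Y` (counted from `X`). -/
noncomputable def eBetween (G : SimpleGraph V) (X Y : Finset V) : ℕ :=
  ∑ x ∈ X, (Y.filter fun y => G.Adj x y).card

/-- Neighbourhood of a vertex as a finset. -/
noncomputable def nbhd (G : SimpleGraph V) (a : V) : Finset V :=
  Finset.univ.filter fun b => G.Adj a b

/-- `(ε,d)`-regularity between `A` and `B`. -/
def EpsRegular (G : SimpleGraph V) (A B : Finset V) (ε d : ℝ) : Prop :=
  ∀ W₁ ⊆ A, ∀ W₂ ⊆ B, ε * A.card ≤ W₁.card → ε * B.card ≤ W₂.card →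
    (1 - ε) * d ≤ (eBetween G W₁ W₂ : ℝ) / (W₁.card * W₂.card) ∧
      (eBetween G W₁ W₂ : ℝ) / (W₁.card * W₂.card) ≤ (1 + ε) * d

/-- `(ε,d)`-super-regularity between `A` and `B`. -/
def SuperRegular (G : SimpleGraph V) (A B : Finset V) (ε d : ℝ) : Prop :=
  EpsRegular G A B ε d ∧
    (∀ a ∈ A, (1 - ε) * d * B.card ≤ ((nbhd G a ∩ B).card : ℝ) ∧
      ((nbhd G a ∩ B).card : ℝ) ≤ (1 + ε) * d * B.card) ∧
    (∀ b ∈ B, (1 - ε) * d * A.card ≤ ((nbhd G b ∩ A).card : ℝ) ∧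
      ((nbhd G b ∩ A).card : ℝ) ≤ (1 + ε) * d * A.card)

private lemma sum_filter_card_comm {α β : Type*} (s : Finset α) (t : Finset β)
    (Q : α → β → Prop) [∀ a b, Decidable (Q a b)] :
    ∑ x ∈ s, (t.filter fun y => Q x y).card = ∑ y ∈ t, (s.filter fun x => Q x y).card := by
  simp only [Finset.card_filter]
  exact Finset.sum_comm

private lemma powersetCard_two_filter {α : Type*} [DecidableEq α] (X : Finset α) (q : α → Prop)
    [DecidablePred q] :
    (X.filter q).powersetCard 2 = (X.powersetCard 2).filter (fun p => ∀ a ∈ p, q a) := by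
  ext p
  simp only [Finset.mem_powersetCard, Finset.mem_filter, Finset.subset_iff, Finset.mem_filter]
  exact ⟨fun ⟨h1, h2⟩ => ⟨⟨fun a ha => (h1 ha).1, h2⟩, fun a ha => (h1 ha).2⟩,
    fun ⟨⟨h1, h2⟩, h3⟩ => ⟨fun a ha => ⟨h1 ha, h3 a ha⟩, h2⟩⟩

private lemma sq_cast_eq (k : ℕ) : ((k : ℝ))^2 = 2*((k.choose 2 : ℕ) : ℝ) + k := by
  rw [Nat.cast_choose_two]
  ring

private lemma aux_pow11 {c : ℝ} (hc : 0 ≤ c) : ((c^12 : ℝ)) ^ ((11:ℝ)/12) = c^(11:ℕ) := by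
  rw [← Real.rpow_natCast c 12, ← Real.rpow_mul hc, ← Real.rpow_natCast c 11]
  norm_num

private lemma aux_pow3 {c : ℝ} (hc : 0 ≤ c) : ((c^12 : ℝ)) ^ ((1:ℝ)/4) = c^(3:ℕ) := by
  rw [← Real.rpow_natCast c 12, ← Real.rpow_mul hc, ← Real.rpow_natCast c 3]
  norm_num

private lemma aux_443 : (1/12:ℝ)^((1:ℝ)/3) ≤ 443/1000 := by
  have hx0' : (0:ℝ) ≤ (1/12:ℝ)^((1:ℝ)/3) := Real.rpow_nonneg (by norm_num) _
  have hcube : ((1/12:ℝ)^((1:ℝ)/3))^(3:ℕ) = 1/12 := by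
    rw [← Real.rpow_natCast ((1/12:ℝ)^((1:ℝ)/3)) 3, ← Real.rpow_mul (by norm_num)]
    norm_num
  by_contra hle
  push_neg at hle
  have h := pow_lt_pow_left₀ hle (by norm_num : (0:ℝ) ≤ 443/1000) (three_ne_zero)
  rw [hcube] at h
  norm_num at h

set_option maxHeartbeats 1000000 in
private lemma final_arith (ε d n u x y e P s M : ℝ)
    (hε : 0 < ε) (hε1 : ε ≤ 1) (hε12 : ε ≤ 1/12)
    (hd0 : 0 < d) (hdlow : n ^ (-ε) ≤ d)
    (hn1 : 1 < n) (hnR : (100/ε)^12 ≤ n)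
    (hu : u = ε ^ ((1:ℝ)/3)) (hs : s = n ^ ((3:ℝ)/2))
    (hx1 : n ^ ((3:ℝ)/4 + 3*ε) ≤ x) (hx2 : x ≤ ε * n)
    (hy1 : n ^ ((3:ℝ)/4 + 3*ε) ≤ y)
    (hMx : x ≤ M) (hMy : y ≤ M)
    (hcon : u * d * n * M < e)
    (hCS : e^2 ≤ y * (2*P + e))
    (hPle : P ≤ x^2/2*((1+ε)*d^2*n) + s*(2*d*n)) : False := by
  have hn0 : (0:ℝ) < n := lt_trans one_pos hn1
  have hu0 : 0 < u := hu ▸ Real.rpow_pos_of_pos hε _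
  have hu2 : u^2 = ε ^ ((2:ℝ)/3) := by
    rw [hu, ← Real.rpow_natCast (ε ^ ((1:ℝ)/3)) 2, ← Real.rpow_mul hε.le]
    norm_num
  have hx0 : 0 < x := lt_of_lt_of_le (Real.rpow_pos_of_pos hn0 _) hx1
  have hy0 : 0 < y := lt_of_lt_of_le (Real.rpow_pos_of_pos hn0 _) hy1
  have hM0 : 0 < M := lt_of_lt_of_le hx0 hMx
  have hs0 : 0 < s := hs ▸ Real.rpow_pos_of_pos hn0 _
  have he0 : 0 < e := lt_trans (by positivity) hcon
  have h100ε : (1:ℝ) ≤ 100/ε := by rw [le_div_iff₀ hε]; linarith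
  have hεu : ε ≤ u := by
    rw [hu]
    calc ε = ε ^ (1:ℝ) := (Real.rpow_one ε).symm
      _ ≤ ε ^ ((1:ℝ)/3) := Real.rpow_le_rpow_of_exponent_ge hε hε1 (by norm_num)
  have hεu2 : ε ≤ u^2 := by
    rw [hu2]
    calc ε = ε ^ (1:ℝ) := (Real.rpow_one ε).symm
      _ ≤ ε ^ ((2:ℝ)/3) := Real.rpow_le_rpow_of_exponent_ge hε hε1 (by norm_num)
  have hpow11 := aux_pow11 (c := 100/ε) (by positivity)
  have hpow3 := aux_pow3 (c := 100/ε) (by positivity)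
  have hdn : n ^ ((11:ℝ)/12) ≤ d * n := by
    calc n ^ ((11:ℝ)/12) ≤ n ^ ((1:ℝ) - ε) :=
          Real.rpow_le_rpow_of_exponent_le hn1.le (by linarith)
      _ = n ^ (-ε) * n := by
          rw [show (1:ℝ) - ε = -ε + 1 by ring, Real.rpow_add hn0, Real.rpow_one]
      _ ≤ d * n := mul_le_mul_of_nonneg_right hdlow hn0.le
  have hnn11 : ((100/ε)^(11:ℕ) : ℝ) ≤ n ^ ((11:ℝ)/12) := by
    rw [← hpow11]
    exact Real.rpow_le_rpow (by positivity) hnR (by norm_num)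
  have hF1 : 100 * y ≤ e := by
    have h2 : (100/ε:ℝ) ≤ (100/ε)^(11:ℕ) := le_self_pow₀ h100ε (by norm_num)
    have h3 : ε * (100/ε) = 100 := by field_simp
    have h4 : ε * ((100/ε)^(11:ℕ)) ≤ u * (d*n) :=
      mul_le_mul hεu (hnn11.trans hdn) (by positivity) hu0.le
    have h5 : 100 ≤ u * (d*n) := by linarith [mul_le_mul_of_nonneg_left h2 hε.le]
    have h6 : (u*(d*n))*y ≤ (u*(d*n))*M := mul_le_mul_of_nonneg_left hMy (by positivity)
    linarith [mul_le_mul_of_nonneg_right h5 hy0.le]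
  have hF2 : (1+ε)*ε ≤ 48/100 * u^2 := by
    have hu13 : ε^((1:ℝ)/3) ≤ 443/1000 :=
      le_trans (Real.rpow_le_rpow hε.le hε12 (by norm_num)) aux_443
    have hε23 : (0:ℝ) < ε^((2:ℝ)/3) := Real.rpow_pos_of_pos hε _
    have hsplit : (1+ε)*ε = ((1+ε) * ε^((1:ℝ)/3)) * ε^((2:ℝ)/3) := by
      rw [mul_assoc, ← Real.rpow_add hε]
      norm_num
    rw [hsplit, hu2]
    have h1 : (1+ε) * ε^((1:ℝ)/3) ≤ 48/100 := by
      have h0 : (1+ε) * ε^((1:ℝ)/3) ≤ (13/12) * (443/1000) :=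
        mul_le_mul (by linarith) hu13 (Real.rpow_nonneg hε.le _) (by norm_num)
      linarith
    exact le_trans (mul_le_mul_of_nonneg_right h1 hε23.le) (by linarith)
  have hF3 : 8 ≤ u^2 * n^((1:ℝ)/4) := by
    have hnn3 : ((100/ε)^(3:ℕ):ℝ) ≤ n^((1:ℝ)/4) := by
      rw [← hpow3]
      exact Real.rpow_le_rpow (by positivity) hnR (by norm_num)
    have h2 : (100/ε:ℝ) ≤ (100/ε)^(3:ℕ) := le_self_pow₀ h100ε (by norm_num)
    have h3 : ε * (100/ε) = 100 := by field_simp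
    have h4 : ε * ((100/ε)^(3:ℕ)) ≤ u^2 * n^((1:ℝ)/4) :=
      mul_le_mul hεu2 hnn3 (by positivity) (by positivity)
    linarith [mul_le_mul_of_nonneg_left h2 hε.le]
  have hF4 : n^((3:ℝ)/4) ≤ d * x := by
    calc n^((3:ℝ)/4) ≤ n^((3:ℝ)/4 + 2*ε) :=
          Real.rpow_le_rpow_of_exponent_le hn1.le (by linarith)
      _ = n^(-ε) * n^((3:ℝ)/4 + 3*ε) := by
          rw [← Real.rpow_add hn0]
          congr 1
          ring
      _ ≤ d * x := mul_le_mul hdlow hx1 (Real.rpow_nonneg hn0.le _) hd0.le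
  have hA99 : (99/100) * e^2 ≤ 2*P*y := by
    linarith [mul_le_mul_of_nonneg_right hF1 he0.le]
  have hB2 : u^2*d^2*n^2*(x*y) ≤ e^2 := by
    have h1 : u*d*n*M ≤ e := hcon.le
    have hsq := mul_self_le_mul_self (by positivity : (0:ℝ) ≤ u*d*n*M) h1
    have hxyM : x*y ≤ M*M := mul_le_mul hMx hMy hy0.le hM0.le
    linarith [mul_le_mul_of_nonneg_left hxyM (by positivity : (0:ℝ) ≤ u^2*d^2*n^2)]
  have hD : (99/100)*(u^2*d^2*n^2*x) ≤ (1+ε)*d^2*n*x^2 + 4*s*d*n := by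
    have hPy : 2*P*y ≤ ((1+ε)*d^2*n*x^2 + 4*s*d*n)*y := by
      linarith [mul_le_mul_of_nonneg_right hPle hy0.le]
    have hC : (99/100)*(u^2*d^2*n^2*x)*y ≤ ((1+ε)*d^2*n*x^2 + 4*s*d*n)*y := by
      linarith [hB2, hA99, hPy]
    exact le_of_mul_le_mul_right hC hy0
  have hE : (1+ε)*d^2*n*x^2 ≤ (48/100)*(u^2*d^2*n^2*x) := by
    have h1 : x*x ≤ x*(ε*n) := mul_le_mul_of_nonneg_left hx2 hx0.le
    linarith [mul_le_mul_of_nonneg_right hF2 (by positivity : (0:ℝ) ≤ d^2*n^2*x),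
      mul_le_mul_of_nonneg_left h1 (by positivity : (0:ℝ) ≤ (1+ε)*d^2*n)]
  have hF : (51/100)*(u^2*d^2*n^2*x) ≤ 4*s*d*n := by linarith
  have hG : (51/100)*(u^2*d*n*x) ≤ 4*s := by
    have h : ((51/100)*(u^2*d*n*x))*(d*n) ≤ (4*s)*(d*n) := by linarith [hF]
    exact le_of_mul_le_mul_right h (by positivity)
  have hn74 : s * n^((1:ℝ)/4) = n * n^((3:ℝ)/4) := by
    rw [hs, ← Real.rpow_add hn0,
      show (3:ℝ)/2 + 1/4 = 1 + 3/4 by norm_num, Real.rpow_add hn0, Real.rpow_one]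
  have hH : 8*s ≤ u^2*d*n*x := by
    have h1 : s*n^((1:ℝ)/4) ≤ n*(d*x) := by
      rw [hn74]
      exact mul_le_mul_of_nonneg_left hF4 hn0.le
    have h2 := mul_le_mul_of_nonneg_left h1 (by positivity : (0:ℝ) ≤ u^2)
    have h3 := mul_le_mul_of_nonneg_right hF3 hs0.le
    linarith
  linarith

set_option maxHeartbeats 4000000 in
/-- Lemma 3.5 of the paper: in a sparse super-regular pair with almost all codegrees of the
appropriate size, small vertex subsets span few edges. -/
theorem edges_in_sparse_graphs :
    ∀ ε : ℝ, 0 < ε → ε ≤ 1 → ∃ n₀ : ℕ, ∀ n : ℕ, n₀ ≤ n →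
    ∀ (W : Type) [Fintype W] [DecidableEq W],
    ∀ (G : SimpleGraph W) (A B : Finset W) (d : ℝ),
      (n : ℝ) ^ (-ε) ≤ d → d ≤ 1 →
      Disjoint A B → A.card = n → B.card = n →
      (∀ u v, G.Adj u v → (u ∈ A ∧ v ∈ B) ∨ (u ∈ B ∧ v ∈ A)) →
      SuperRegular G A B ε d →
      (((((A.powersetCard 2).filter fun p =>
          ¬ ∀ a ∈ p, ∀ a' ∈ p, a ≠ a' →
            (((nbhd G a ∩ nbhd G a').card : ℝ) ≤ (1 + ε) * d ^ 2 * n))).card : ℝ)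
        ≤ (n : ℝ) ^ ((3 : ℝ) / 2)) →
      ∀ X ⊆ A, ∀ Y ⊆ B,
        (n : ℝ) ^ ((3 : ℝ) / 4 + 3 * ε) ≤ (X.card : ℝ) → (X.card : ℝ) ≤ ε * n →
        (n : ℝ) ^ ((3 : ℝ) / 4 + 3 * ε) ≤ (Y.card : ℝ) → (Y.card : ℝ) ≤ ε * n →
        (eBetween G X Y : ℝ) ≤ ε ^ ((1 : ℝ) / 3) * d * n * max (X.card : ℝ) (Y.card : ℝ) := by
  intro ε hε hε1
  refine ⟨max 2 ⌈(100/ε)^12⌉₊, ?_⟩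
  intro n hn W _ _ G A B d hdlow hd1 hAB hA hB hbip hSR hcodeg X hXA Y hYB hX1 hX2 hY1 hY2
  have hn2 : (2:ℕ) ≤ n := le_trans (le_max_left _ _) hn
  have hnR : ((100/ε)^12 : ℝ) ≤ (n:ℝ) := by
    have h1 : ⌈(100/ε)^12⌉₊ ≤ n := le_trans (le_max_right _ _) hn
    exact le_trans (Nat.le_ceil _) (Nat.cast_le.mpr h1)
  have hn1 : (1:ℝ) < (n:ℝ) := by exact_mod_cast lt_of_lt_of_le one_lt_two hn2
  have hn0 : (0:ℝ) < (n:ℝ) := lt_trans one_pos hn1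
  have hd0 : 0 < d := lt_of_lt_of_le (Real.rpow_pos_of_pos hn0 _) hdlow
  -- ε ≤ 1/12
  have hε12 : ε ≤ 1/12 := by
    have hXn : (n:ℝ) ^ ((3:ℝ)/4 + 3*ε) ≤ (n:ℝ) ^ (1:ℝ) := by
      rw [Real.rpow_one]
      refine hX1.trans (hX2.trans ?_)
      nlinarith
    have := (Real.rpow_le_rpow_left_iff hn1).mp hXn
    linarith
  -- positivity of the relevant quantities
  have hx0 : (0:ℝ) < (X.card : ℝ) := lt_of_lt_of_le (Real.rpow_pos_of_pos hn0 _) hX1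
  have hy0 : (0:ℝ) < (Y.card : ℝ) := lt_of_lt_of_le (Real.rpow_pos_of_pos hn0 _) hY1
  -- by contradiction
  by_contra hcon
  push_neg at hcon
  set M : ℝ := max (X.card : ℝ) (Y.card : ℝ) with hM
  have hMx : (X.card : ℝ) ≤ M := le_max_left _ _
  have hMy : (Y.card : ℝ) ≤ M := le_max_right _ _
  have hM0 : 0 < M := lt_of_lt_of_le hx0 hMx
  -- the degree-from-Y form of the edge count
  have hswap : eBetween G X Y = ∑ y ∈ Y, (X.filter fun x => G.Adj x y).card := by
    unfold eBetween
    exact sum_filter_card_comm X Y fun x y => G.Adj x y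
  -- the paths count P
  obtain ⟨P, hPdef⟩ : ∃ P : ℕ,
      (∑ p ∈ X.powersetCard 2, (Y.filter fun y => ∀ a ∈ p, G.Adj a y).card) = P := ⟨_, rfl⟩
  have hPcount : ∑ y ∈ Y, ((X.filter fun x => G.Adj x y).card).choose 2 = P := by
    rw [← hPdef, sum_filter_card_comm (X.powersetCard 2) Y (fun p y => ∀ a ∈ p, G.Adj a y)]
    refine Finset.sum_congr rfl fun y _ => ?_
    rw [← Finset.card_powersetCard, powersetCard_two_filter]
    congr!
  -- Cauchy-Schwarz
  have hCS : ((eBetween G X Y : ℝ))^2 ≤ (Y.card : ℝ) * (2*(P:ℝ) + (eBetween G X Y : ℝ)) := by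
    have h1 : ((eBetween G X Y : ℝ)) = ∑ y ∈ Y, ((X.filter fun x => G.Adj x y).card : ℝ) := by
      rw [hswap]; push_cast; rfl
    have h2 := sq_sum_le_card_mul_sum_sq (s := Y)
      (f := fun y => ((X.filter fun x => G.Adj x y).card : ℝ))
    have h3 : ∑ y ∈ Y, ((X.filter fun x => G.Adj x y).card : ℝ)^2
        = 2*(P:ℝ) + (eBetween G X Y : ℝ) := by
      calc ∑ y ∈ Y, ((X.filter fun x => G.Adj x y).card : ℝ)^2
          = ∑ y ∈ Y, (2*(((X.filter fun x => G.Adj x y).card.choose 2 : ℕ) : ℝ)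
              + ((X.filter fun x => G.Adj x y).card : ℝ)) :=
            Finset.sum_congr rfl fun y _ => sq_cast_eq _
        _ = 2*((∑ y ∈ Y, ((X.filter fun x => G.Adj x y).card).choose 2 : ℕ) : ℝ)
              + ((∑ y ∈ Y, (X.filter fun x => G.Adj x y).card : ℕ) : ℝ) := by
            push_cast
            rw [Finset.mul_sum, Finset.sum_add_distrib]
        _ = 2*(P:ℝ) + (eBetween G X Y : ℝ) := by rw [hPcount, ← hswap]
    calc ((eBetween G X Y : ℝ))^2
        = (∑ y ∈ Y, ((X.filter fun x => G.Adj x y).card : ℝ))^2 := by rw [h1]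
      _ ≤ (Y.card : ℝ) * ∑ y ∈ Y, ((X.filter fun x => G.Adj x y).card : ℝ)^2 := h2
      _ = (Y.card : ℝ) * (2*(P:ℝ) + (eBetween G X Y : ℝ)) := by rw [h3]
  -- bound on P
  have hdeg : ∀ a ∈ A, ((nbhd G a ∩ B).card : ℝ) ≤ 2 * d * n := by
    intro a ha
    refine le_trans (hSR.2.1 a ha).2 ?_
    rw [hB]
    nlinarith [mul_nonneg (mul_nonneg (sub_nonneg.mpr hε1) hd0.le) hn0.le]
  have hPle : (P:ℝ) ≤ (X.card:ℝ)^2/2 * ((1+ε)*d^2*n) + (n:ℝ)^((3:ℝ)/2) * (2*d*n) := by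
    classical
    set pred : Finset W → Prop := fun p => ∀ a ∈ p, ∀ a' ∈ p, a ≠ a' →
      (((nbhd G a ∩ nbhd G a').card : ℝ) ≤ (1 + ε) * d ^ 2 * n) with hpred
    have hsplit : (P:ℝ) =
        (∑ p ∈ (X.powersetCard 2).filter pred,
          ((Y.filter fun y => ∀ a ∈ p, G.Adj a y).card : ℝ)) +
        (∑ p ∈ (X.powersetCard 2).filter (fun p => ¬ pred p),
          ((Y.filter fun y => ∀ a ∈ p, G.Adj a y).card : ℝ)) := by
      rw [← hPdef]
      push_cast
      rw [Finset.sum_filter_add_sum_filter_not]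
    have hgood : ∑ p ∈ (X.powersetCard 2).filter pred,
        ((Y.filter fun y => ∀ a ∈ p, G.Adj a y).card : ℝ)
        ≤ (X.card:ℝ)^2/2 * ((1+ε)*d^2*n) := by
      have hb : ∀ p ∈ (X.powersetCard 2).filter pred,
          ((Y.filter fun y => ∀ a ∈ p, G.Adj a y).card : ℝ) ≤ (1+ε)*d^2*n := by
        intro p hp
        rw [Finset.mem_filter, Finset.mem_powersetCard] at hp
        obtain ⟨a, b, hab, rfl⟩ := Finset.card_eq_two.mp hp.1.2
        have hsub : Y.filter (fun y => ∀ a' ∈ ({a, b} : Finset W), G.Adj a' y)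
            ⊆ nbhd G a ∩ nbhd G b := by
          intro y hy
          rw [Finset.mem_filter] at hy
          simp only [Finset.mem_inter, nbhd, Finset.mem_filter, Finset.mem_univ, true_and]
          exact ⟨hy.2 a (by simp), hy.2 b (by simp)⟩
        refine le_trans (Nat.cast_le.mpr (Finset.card_le_card hsub)) ?_
        exact hp.2 a (by simp) b (by simp) hab
      refine le_trans (Finset.sum_le_card_nsmul _ _ _ hb) ?_
      rw [nsmul_eq_mul]
      have hc1 : ((X.powersetCard 2).filter pred).card ≤ X.card.choose 2 := by
        rw [← Finset.card_powersetCard 2 X]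
        exact Finset.card_le_card (Finset.filter_subset _ _)
      have hc2 : (((X.powersetCard 2).filter pred).card : ℝ) ≤ (X.card:ℝ)^2/2 := by
        refine le_trans (Nat.cast_le.mpr hc1) ?_
        rw [Nat.cast_choose_two]
        nlinarith
      have hpos : (0:ℝ) ≤ (1+ε)*d^2*n := by positivity
      exact mul_le_mul_of_nonneg_right hc2 hpos
    have hbad : ∑ p ∈ (X.powersetCard 2).filter (fun p => ¬ pred p),
        ((Y.filter fun y => ∀ a ∈ p, G.Adj a y).card : ℝ)
        ≤ (n:ℝ)^((3:ℝ)/2) * (2*d*n) := by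
      have hb : ∀ p ∈ (X.powersetCard 2).filter (fun p => ¬ pred p),
          ((Y.filter fun y => ∀ a ∈ p, G.Adj a y).card : ℝ) ≤ 2*d*n := by
        intro p hp
        rw [Finset.mem_filter, Finset.mem_powersetCard] at hp
        obtain ⟨a, b, hab, rfl⟩ := Finset.card_eq_two.mp hp.1.2
        have haA : a ∈ A := hXA (hp.1.1 (by simp))
        have hsub : Y.filter (fun y => ∀ a' ∈ ({a, b} : Finset W), G.Adj a' y)
            ⊆ nbhd G a ∩ B := by
          intro y hy
          rw [Finset.mem_filter] at hy
          simp only [Finset.mem_inter, nbhd, Finset.mem_filter, Finset.mem_univ, true_and]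
          exact ⟨hy.2 a (by simp), hYB hy.1⟩
        exact le_trans (Nat.cast_le.mpr (Finset.card_le_card hsub)) (hdeg a haA)
      refine le_trans (Finset.sum_le_card_nsmul _ _ _ hb) ?_
      rw [nsmul_eq_mul]
      have hsubbad : (X.powersetCard 2).filter (fun p => ¬ pred p)
          ⊆ (A.powersetCard 2).filter (fun p => ¬ pred p) :=
        Finset.filter_subset_filter _ (Finset.powersetCard_mono hXA)
      have hc : (((X.powersetCard 2).filter (fun p => ¬ pred p)).card : ℝ)
          ≤ (n:ℝ)^((3:ℝ)/2) := by
        refine le_trans (Nat.cast_le.mpr (Finset.card_le_card hsubbad)) ?_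
        exact hcodeg
      have hpos : (0:ℝ) ≤ 2*d*n := by positivity
      exact mul_le_mul_of_nonneg_right hc hpos
    rw [hsplit]
    exact add_le_add hgood hbad
  exact final_arith ε d n (ε ^ ((1:ℝ)/3)) (X.card : ℝ) (Y.card : ℝ) (eBetween G X Y : ℝ)
    (P : ℝ) ((n:ℝ)^((3:ℝ)/2)) M hε hε1 hε12 hd0 hdlow hn1 hnR rfl rfl hX1 hX2 hY1
    hMx hMy hcon hCS hPle
end

section
/- Suppose $X,X_1,\ldots,X_m$ are real-valued random variables with $X=\sum_{i=1}^m X_i$, $|X_i|\leq B$ for all $i$, and $\sum_{i=1}^m\mathbb{E}_i[|X_i|]\leq\mu$, where $\mathbb{E}_i[\cdot]$ denotes conditional expectation given the values of $X_j$ for $j<i$. Then $\mathbb{P}[|X|>2\mu]\leq 2\exp(-\mu/(4B))$. -/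
open MeasureTheory

private lemma exp_le_one_add_aux {B : ℝ} (hB : 0 < B) (a x : ℝ) (hx : |x| ≤ B) :
    Real.exp (a * x) ≤ 1 + (Real.exp (|a| * B) - 1) / B * |x| := by
  have h2 : Real.exp (a * x) ≤ Real.exp (|a| * |x|) :=
    Real.exp_le_exp.mpr ((le_abs_self _).trans_eq (abs_mul a x))
  refine h2.trans ?_
  have hθ0 : 0 ≤ |x| / B := div_nonneg (abs_nonneg x) hB.le
  have hθ1 : |x| / B ≤ 1 := (div_le_one hB).mpr hx
  have hconv := convexOn_exp.2 (Set.mem_univ (0 : ℝ)) (Set.mem_univ (|a| * B))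
      (by linarith : (0 : ℝ) ≤ 1 - |x| / B) hθ0 (by ring)
  simp only [smul_eq_mul, mul_zero, zero_add, Real.exp_zero] at hconv
  have harg : |x| / B * (|a| * B) = |a| * |x| := by field_simp
  rw [harg] at hconv
  calc Real.exp (|a| * |x|) ≤ (1 - |x| / B) * 1 + |x| / B * Real.exp (|a| * B) := hconv
    _ = 1 + (Real.exp (|a| * B) - 1) / B * |x| := by field_simp; ring

private lemma markov_aux {Ω : Type*} [MeasurableSpace Ω] (μ : Measure Ω)
    [IsProbabilityMeasure μ] (f : Ω → ℝ) (hf : Integrable f μ) (hf0 : ∀ ω, 0 ≤ f ω)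
    (K ε : ℝ) (hε : 0 < ε) (hK : ∫ ω, f ω ∂μ ≤ K) :
    (μ {ω | ε ≤ f ω}).toReal ≤ K / ε := by
  have h := mul_meas_ge_le_integral_of_nonneg (μ := μ)
    (Filter.Eventually.of_forall hf0) hf ε
  rw [le_div_iff₀ hε]
  have h' : ε * (μ {ω | ε ≤ f ω}).toReal ≤ ∫ x, f x ∂μ := h
  linarith

private lemma freedman_mgf {Ω : Type*} [MeasurableSpace Ω] (μ : Measure Ω)
    [IsProbabilityMeasure μ] {m : ℕ} (X : Fin m → Ω → ℝ)
    (hX : ∀ i, Measurable (X i))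
    (B M : ℝ) (hB : 0 < B)
    (hbdd : ∀ i ω, |X i ω| ≤ B)
    (hcond : ∀ᵐ ω ∂μ,
      (∑ i : Fin m,
        (μ[(fun ω' => |X i ω'|) |
          ⨆ (j : Fin m) (_ : j < i), MeasurableSpace.comap (X j) inferInstance]) ω) ≤ M)
    (a : ℝ) :
    ∫ ω, Real.exp (a * ∑ i : Fin m, X i ω) ∂μ ≤
      Real.exp ((Real.exp (|a| * B) - 1) / B * M) := by
  set c : ℝ := (Real.exp (|a| * B) - 1) / B with hc
  have hc0 : 0 ≤ c := by
    have : (1 : ℝ) ≤ Real.exp (|a| * B) := by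
      rw [← Real.exp_zero]
      exact Real.exp_le_exp.mpr (by positivity)
    exact div_nonneg (by linarith) hB.le
  set 𝓕 : Fin m → MeasurableSpace Ω := fun i =>
    ⨆ (j : Fin m) (_ : j < i), MeasurableSpace.comap (X j) inferInstance with h𝓕def
  have h𝓕 : ∀ i, 𝓕 i ≤ ‹MeasurableSpace Ω› := fun i =>
    iSup₂_le fun j _ => (hX j).comap_le
  have h𝓕mono : ∀ {i j : Fin m}, i ≤ j → 𝓕 i ≤ 𝓕 j := fun {i j} hij =>
    iSup₂_le fun k hk =>
      le_iSup₂ (f := fun (k : Fin m) (_ : k < j) =>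
        MeasurableSpace.comap (X k) inferInstance) k (lt_of_lt_of_le hk hij)
  have hXmem : ∀ {i j : Fin m}, i < j → Measurable[𝓕 j] (X i) := fun {i j} h =>
    Measurable.of_comap_le (le_iSup₂ (f := fun (k : Fin m) (_ : k < j) =>
      MeasurableSpace.comap (X k) inferInstance) i h)
  set g : Fin m → Ω → ℝ := fun i => μ[(fun ω' => |X i ω'|) | 𝓕 i] with hg
  have hcond' : ∀ᵐ ω ∂μ, (∑ i : Fin m, g i ω) ≤ M := hcond
  have habs_int : ∀ i : Fin m, Integrable (fun ω => |X i ω|) μ := fun i =>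
    Integrable.mono' (integrable_const B) (hX i).abs.aestronglyMeasurable
      (Filter.Eventually.of_forall fun ω => by
        rw [Real.norm_eq_abs, abs_abs]; exact hbdd i ω)
  have hg_sm : ∀ i, StronglyMeasurable[𝓕 i] (g i) := fun i => stronglyMeasurable_condExp
  have hg_meas : ∀ i, Measurable (g i) := fun i => ((hg_sm i).mono (h𝓕 i)).measurable
  have hg_nonneg : ∀ i, 0 ≤ᵐ[μ] g i := fun i =>
    condExp_nonneg (Filter.Eventually.of_forall fun ω => abs_nonneg _)
  have hg0all : ∀ᵐ ω ∂μ, ∀ i : Fin m, 0 ≤ g i ω := by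
    rw [ae_all_iff]; exact fun i => hg_nonneg i
  set F : ℕ → Ω → ℝ := fun k ω =>
    Real.exp (∑ i ∈ Finset.univ.filter (fun i : Fin m => (i : ℕ) < k),
      (a * X i ω - c * g i ω)) with hF
  have hF_meas : ∀ k, Measurable (F k) := fun k =>
    (Finset.measurable_sum _ fun i _ =>
      ((measurable_const.mul (hX i)).sub (measurable_const.mul (hg_meas i)))).exp
  have hFpos : ∀ k ω, 0 < F k ω := fun k ω => Real.exp_pos _
  have haX : ∀ (i : Fin m) ω, a * X i ω ≤ |a| * B := fun i ω =>
    calc a * X i ω ≤ |a * X i ω| := le_abs_self _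
      _ = |a| * |X i ω| := abs_mul a _
      _ ≤ |a| * B := mul_le_mul_of_nonneg_left (hbdd i ω) (abs_nonneg a)
  have hF_bdd : ∀ k, ∀ᵐ ω ∂μ, ‖F k ω‖ ≤ Real.exp ((m : ℝ) * (|a| * B)) := by
    intro k
    filter_upwards [hg0all] with ω hω
    rw [Real.norm_eq_abs, abs_of_pos (hFpos k ω), Real.exp_le_exp]
    calc ∑ i ∈ Finset.univ.filter (fun i : Fin m => (i : ℕ) < k), (a * X i ω - c * g i ω)
        ≤ ∑ _i ∈ Finset.univ.filter (fun i : Fin m => (i : ℕ) < k), (|a| * B) :=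
          Finset.sum_le_sum fun i _ => by
            have h2 : 0 ≤ c * g i ω := mul_nonneg hc0 (hω i)
            have h1 := haX i ω
            linarith
      _ = ((Finset.univ.filter (fun i : Fin m => (i : ℕ) < k)).card : ℝ) * (|a| * B) := by
          rw [Finset.sum_const, nsmul_eq_mul]
      _ ≤ (m : ℝ) * (|a| * B) := by
          refine mul_le_mul_of_nonneg_right ?_ (by positivity)
          have : (Finset.univ.filter (fun i : Fin m => (i : ℕ) < k)).card ≤ m :=
            le_trans (Finset.card_filter_le _ _) (by simp)
          exact_mod_cast this
  have hF_int : ∀ k, Integrable (F k) μ := fun k =>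
    Integrable.mono' (integrable_const _) (hF_meas k).aestronglyMeasurable (hF_bdd k)
  -- key induction
  have key : ∀ k, ∫ ω, F k ω ∂μ ≤ 1 := by
    intro k
    induction k with
    | zero =>
      have h0 : ∀ ω : Ω, F 0 ω = 1 := fun ω => by simp [hF]
      rw [integral_congr_ae (Filter.Eventually.of_forall h0)]
      simp
    | succ k ih =>
      by_cases hk : k < m
      · set i0 : Fin m := ⟨k, hk⟩ with hi0
        have hsplit : Finset.univ.filter (fun i : Fin m => (i : ℕ) < k + 1)
            = insert i0 (Finset.univ.filter (fun i : Fin m => (i : ℕ) < k)) := by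
          ext i
          simp only [Finset.mem_insert, Finset.mem_filter, Finset.mem_univ, true_and,
            Fin.ext_iff, hi0]
          omega
        have hnotmem : i0 ∉ Finset.univ.filter (fun i : Fin m => (i : ℕ) < k) := by
          simp [hi0]
        set P : Ω → ℝ := fun ω => F k ω * Real.exp (-(c * g i0 ω)) with hP
        set E : Ω → ℝ := fun ω => Real.exp (a * X i0 ω) with hE
        have hFsucc : ∀ ω, F (k + 1) ω = P ω * E ω := by
          intro ω
          show Real.exp _ = (F k ω * Real.exp (-(c * g i0 ω))) * Real.exp (a * X i0 ω)
          rw [hsplit, Finset.sum_insert hnotmem]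
          show Real.exp _ = Real.exp _ * Real.exp (-(c * g i0 ω)) * Real.exp (a * X i0 ω)
          rw [mul_assoc, ← Real.exp_add, ← Real.exp_add]
          congr 1
          ring
        have hP_sm : StronglyMeasurable[𝓕 i0] P := by
          refine Measurable.stronglyMeasurable (Measurable.mul ?_ ?_)
          · refine Measurable.exp (Finset.measurable_sum _ fun i hi => ?_)
            have hii : i < i0 := by
              simp only [Finset.mem_filter, Finset.mem_univ, true_and] at hi
              exact hi
            exact (measurable_const.mul (hXmem hii)).sub
              (measurable_const.mul ((hg_sm i).mono (h𝓕mono hii.le)).measurable)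
          · exact ((measurable_const.mul (hg_sm i0).measurable).neg).exp
        have hPE_int : Integrable (P * E) μ :=
          (hF_int (k + 1)).congr (Filter.Eventually.of_forall fun ω => hFsucc ω)
        have hE_int : Integrable E μ :=
          Integrable.mono' (integrable_const (Real.exp (|a| * B)))
            ((measurable_const.mul (hX i0)).exp.aestronglyMeasurable)
            (Filter.Eventually.of_forall fun ω => by
              rw [hE, Real.norm_eq_abs, abs_of_pos (Real.exp_pos _), Real.exp_le_exp]
              exact haX i0 ω)
        have hpull : μ[P * E | 𝓕 i0] =ᵐ[μ] P * μ[E | 𝓕 i0] :=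
          condExp_mul_of_stronglyMeasurable_left hP_sm hPE_int hE_int
        have h1int : Integrable (fun ω => 1 + c * |X i0 ω|) μ :=
          (integrable_const (1 : ℝ)).add ((habs_int i0).const_mul c)
        have hEle : E ≤ᵐ[μ] fun ω => 1 + c * |X i0 ω| :=
          Filter.Eventually.of_forall fun ω => exp_le_one_add_aux hB a (X i0 ω) (hbdd i0 ω)
        have hmono : μ[E | 𝓕 i0] ≤ᵐ[μ] μ[(fun ω => 1 + c * |X i0 ω|) | 𝓕 i0] :=
          condExp_mono hE_int h1int hEle
        have hsum : μ[(fun ω => 1 + c * |X i0 ω|) | 𝓕 i0] =ᵐ[μ] fun ω => 1 + c * g i0 ω := by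
          have h2 : μ[(fun ω => 1 + c * |X i0 ω|) | 𝓕 i0] =ᵐ[μ]
              μ[(fun _ : Ω => (1 : ℝ)) | 𝓕 i0] + μ[(fun ω => c * |X i0 ω|) | 𝓕 i0] :=
            condExp_add (μ := μ) (m := 𝓕 i0) (integrable_const (1 : ℝ))
              ((habs_int i0).const_mul c)
          have h3 : μ[(fun ω => c * |X i0 ω|) | 𝓕 i0] =ᵐ[μ] fun ω => c * g i0 ω :=
            condExp_smul (μ := μ) (m := 𝓕 i0) c (fun ω' => |X i0 ω'|)
          filter_upwards [h2, h3] with ω hω2 hω3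
          rw [hω2]
          show (μ[(fun _ : Ω => (1 : ℝ)) | 𝓕 i0]) ω + (μ[(fun ω => c * |X i0 ω|) | 𝓕 i0]) ω
            = 1 + c * g i0 ω
          rw [hω3, condExp_const (h𝓕 i0)]
        have hstep : μ[F (k + 1) | 𝓕 i0] ≤ᵐ[μ] F k := by
          have hPF : μ[F (k + 1) | 𝓕 i0] =ᵐ[μ] μ[P * E | 𝓕 i0] :=
            condExp_congr_ae (Filter.Eventually.of_forall fun ω => hFsucc ω)
          filter_upwards [hPF, hpull, hmono, hsum] with ω h1 h2 h3 h4
          rw [h1, h2]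
          have hPnn : 0 ≤ P ω := mul_nonneg (hFpos k ω).le (Real.exp_pos _).le
          have hEc : (μ[E | 𝓕 i0]) ω ≤ 1 + c * g i0 ω := by
            rw [← h4]; exact h3
          calc P ω * (μ[E | 𝓕 i0]) ω ≤ P ω * (1 + c * g i0 ω) :=
                mul_le_mul_of_nonneg_left hEc hPnn
            _ ≤ P ω * Real.exp (c * g i0 ω) := by
                refine mul_le_mul_of_nonneg_left ?_ hPnn
                linarith [Real.add_one_le_exp (c * g i0 ω)]
            _ = F k ω := by
                show F k ω * Real.exp (-(c * g i0 ω)) * Real.exp (c * g i0 ω) = F k ω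
                rw [mul_assoc, ← Real.exp_add, neg_add_cancel, Real.exp_zero, mul_one]
        calc ∫ ω, F (k + 1) ω ∂μ = ∫ ω, (μ[F (k + 1) | 𝓕 i0]) ω ∂μ :=
              (integral_condExp (h𝓕 i0)).symm
          _ ≤ ∫ ω, F k ω ∂μ := integral_mono_ae integrable_condExp (hF_int k) hstep
          _ ≤ 1 := ih
      · have heq : F (k + 1) = F k := by
          funext ω
          show Real.exp _ = Real.exp _
          congr 1
          refine Finset.sum_congr ?_ (fun _ _ => rfl)
          ext i
          simp only [Finset.mem_filter, Finset.mem_univ, true_and]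
          have := i.isLt
          omega
        rw [heq]; exact ih
  -- conclude
  have hSint : Integrable (fun ω => Real.exp (a * ∑ i : Fin m, X i ω)) μ := by
    refine Integrable.mono' (integrable_const (Real.exp (|a| * ((m : ℝ) * B))))
      ((measurable_const.mul (Finset.measurable_sum _ fun i _ => hX i)).exp.aestronglyMeasurable)
      (Filter.Eventually.of_forall fun ω => ?_)
    rw [Real.norm_eq_abs, abs_of_pos (Real.exp_pos _), Real.exp_le_exp]
    calc a * ∑ i : Fin m, X i ω ≤ |a * ∑ i : Fin m, X i ω| := le_abs_self _
      _ = |a| * |∑ i : Fin m, X i ω| := abs_mul _ _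
      _ ≤ |a| * ((m : ℝ) * B) := by
          refine mul_le_mul_of_nonneg_left ?_ (abs_nonneg a)
          calc |∑ i : Fin m, X i ω| ≤ ∑ i : Fin m, |X i ω| := Finset.abs_sum_le_sum_abs _ _
            _ ≤ ∑ _i : Fin m, B := Finset.sum_le_sum fun i _ => hbdd i ω
            _ = (m : ℝ) * B := by rw [Finset.sum_const, nsmul_eq_mul]; simp
  have hfull : Finset.univ.filter (fun i : Fin m => (i : ℕ) < m) = Finset.univ := by
    ext i; simp [i.isLt]
  have hfin : ∀ᵐ ω ∂μ, Real.exp (a * ∑ i : Fin m, X i ω) ≤ F m ω * Real.exp (c * M) := by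
    filter_upwards [hcond', hg0all] with ω h1 _h2
    have hid : a * ∑ i : Fin m, X i ω
        = (∑ i : Fin m, (a * X i ω - c * g i ω)) + c * ∑ i : Fin m, g i ω := by
      rw [Finset.sum_sub_distrib, ← Finset.mul_sum, ← Finset.mul_sum]
      ring
    have hFm : F m ω = Real.exp (∑ i : Fin m, (a * X i ω - c * g i ω)) := by
      show Real.exp _ = _
      rw [hfull]
    rw [hid, Real.exp_add, hFm]
    refine mul_le_mul_of_nonneg_left ?_ (Real.exp_pos _).le
    exact Real.exp_le_exp.mpr (mul_le_mul_of_nonneg_left h1 hc0)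
  calc ∫ ω, Real.exp (a * ∑ i : Fin m, X i ω) ∂μ
      ≤ ∫ ω, F m ω * Real.exp (c * M) ∂μ :=
        integral_mono_ae hSint ((hF_int m).mul_const _) hfin
    _ = (∫ ω, F m ω ∂μ) * Real.exp (c * M) := integral_mul_const _ _
    _ ≤ 1 * Real.exp (c * M) :=
        mul_le_mul_of_nonneg_right (key m) (Real.exp_pos _).le
    _ = Real.exp (c * M) := one_mul _

/-- A convenient form of Freedman's inequality: if `X = ∑ i, X i` with `|X i| ≤ B`, and the sum
of the conditional expectations `𝔼_i[|X i|]` (conditional on the earlier variables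
`X j`, `j < i`) is at most `M` almost surely, then `ℙ[|X| > 2M] ≤ 2 exp(-M/(4B))`. -/
theorem freedman_convenient {Ω : Type*} [MeasurableSpace Ω] (μ : Measure Ω)
    [IsProbabilityMeasure μ] {m : ℕ} (X : Fin m → Ω → ℝ)
    (hX : ∀ i, Measurable (X i))
    (B M : ℝ) (hB : 0 < B)
    (hbdd : ∀ i ω, |X i ω| ≤ B)
    (hcond : ∀ᵐ ω ∂μ,
      (∑ i : Fin m,
        (μ[(fun ω' => |X i ω'|) |
          ⨆ (j : Fin m) (_ : j < i), MeasurableSpace.comap (X j) inferInstance]) ω) ≤ M) :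
    (μ {ω | 2 * M < |∑ i : Fin m, X i ω|}).toReal ≤ 2 * Real.exp (-M / (4 * B)) := by
  have hM : 0 ≤ M := by
    have hg0 : ∀ᵐ ω ∂μ, ∀ i : Fin m,
        0 ≤ (μ[(fun ω' => |X i ω'|) |
          ⨆ (j : Fin m) (_ : j < i), MeasurableSpace.comap (X j) inferInstance]) ω := by
      rw [ae_all_iff]
      exact fun i => condExp_nonneg (Filter.Eventually.of_forall fun ω => abs_nonneg _)
    haveI : (ae μ).NeBot := ae_neBot.2 (IsProbabilityMeasure.ne_zero μ)
    obtain ⟨ω, h1, h2⟩ := (hcond.and hg0).exists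
    exact le_trans (Finset.sum_nonneg fun i _ => h2 i) h1
  set a : ℝ := Real.log 2 / B with ha_def
  have ha : 0 < a := div_pos (Real.log_pos one_lt_two) hB
  have haB : a * B = Real.log 2 := div_mul_cancel₀ _ hB.ne'
  have hcval : (Real.exp (|a| * B) - 1) / B = 1 / B := by
    rw [abs_of_pos ha, haB, Real.exp_log two_pos]
    norm_num
  have hcval' : (Real.exp (|-a| * B) - 1) / B = 1 / B := by
    rw [abs_neg, abs_of_pos ha, haB, Real.exp_log two_pos]
    norm_num
  have hmg1 := freedman_mgf μ X hX B M hB hbdd hcond a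
  have hmg2 := freedman_mgf μ X hX B M hB hbdd hcond (-a)
  rw [hcval] at hmg1
  rw [hcval'] at hmg2
  have hSmeas : Measurable fun ω => ∑ i : Fin m, X i ω :=
    Finset.measurable_sum _ fun i _ => hX i
  have hint : ∀ b : ℝ, Integrable (fun ω => Real.exp (b * ∑ i : Fin m, X i ω)) μ := by
    intro b
    refine Integrable.mono' (integrable_const (Real.exp (|b| * ((m : ℝ) * B))))
      ((measurable_const.mul hSmeas).exp.aestronglyMeasurable)
      (Filter.Eventually.of_forall fun ω => ?_)
    rw [Real.norm_eq_abs, abs_of_pos (Real.exp_pos _), Real.exp_le_exp]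
    calc b * ∑ i : Fin m, X i ω ≤ |b * ∑ i : Fin m, X i ω| := le_abs_self _
      _ = |b| * |∑ i : Fin m, X i ω| := abs_mul _ _
      _ ≤ |b| * ((m : ℝ) * B) := by
          refine mul_le_mul_of_nonneg_left ?_ (abs_nonneg b)
          calc |∑ i : Fin m, X i ω| ≤ ∑ i : Fin m, |X i ω| := Finset.abs_sum_le_sum_abs _ _
            _ ≤ ∑ _i : Fin m, B := Finset.sum_le_sum fun i _ => hbdd i ω
            _ = (m : ℝ) * B := by rw [Finset.sum_const, nsmul_eq_mul]; simp
  have hεpos : 0 < Real.exp (a * (2 * M)) := Real.exp_pos _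
  -- exponent comparison
  have hexp_le : Real.exp (1 / B * M) / Real.exp (a * (2 * M)) ≤ Real.exp (-M / (4 * B)) := by
    rw [← Real.exp_sub, Real.exp_le_exp, ha_def]
    have hlog := Real.log_two_gt_d9
    have hkey : (1 - 2 * Real.log 2) * M ≤ -(M / 4) := by nlinarith
    calc 1 / B * M - Real.log 2 / B * (2 * M) = ((1 - 2 * Real.log 2) * M) / B := by ring
      _ ≤ (-(M / 4)) / B := by gcongr
      _ = -M / (4 * B) := by ring
  -- first tail
  have ht1 : (μ {ω | 2 * M < ∑ i : Fin m, X i ω}).toReal ≤ Real.exp (-M / (4 * B)) := by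
    have hsub : {ω | 2 * M < ∑ i : Fin m, X i ω}
        ⊆ {ω | Real.exp (a * (2 * M)) ≤ Real.exp (a * ∑ i : Fin m, X i ω)} := by
      intro ω hω
      simp only [Set.mem_setOf_eq] at hω ⊢
      exact Real.exp_le_exp.mpr (le_of_lt (mul_lt_mul_of_pos_left hω ha))
    refine le_trans (ENNReal.toReal_mono (measure_ne_top μ _) (measure_mono hsub)) ?_
    refine le_trans (markov_aux μ _ (hint a) (fun ω => (Real.exp_pos _).le)
      _ _ hεpos hmg1) hexp_le
  -- second tail
  have ht2 : (μ {ω | 2 * M < -∑ i : Fin m, X i ω}).toReal ≤ Real.exp (-M / (4 * B)) := by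
    have hsub : {ω | 2 * M < -∑ i : Fin m, X i ω}
        ⊆ {ω | Real.exp (a * (2 * M)) ≤ Real.exp (-a * ∑ i : Fin m, X i ω)} := by
      intro ω hω
      simp only [Set.mem_setOf_eq] at hω ⊢
      refine Real.exp_le_exp.mpr ?_
      have := mul_lt_mul_of_pos_left hω ha
      nlinarith
    refine le_trans (ENNReal.toReal_mono (measure_ne_top μ _) (measure_mono hsub)) ?_
    refine le_trans (markov_aux μ _ (hint (-a)) (fun ω => (Real.exp_pos _).le)
      _ _ hεpos hmg2) hexp_le
  -- combine
  have hunion : {ω | 2 * M < |∑ i : Fin m, X i ω|}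
      ⊆ {ω | 2 * M < ∑ i : Fin m, X i ω} ∪ {ω | 2 * M < -∑ i : Fin m, X i ω} := by
    intro ω hω
    simp only [Set.mem_setOf_eq, Set.mem_union] at hω ⊢
    rcases lt_abs.mp hω with h | h
    · exact Or.inl h
    · exact Or.inr h
  calc (μ {ω | 2 * M < |∑ i : Fin m, X i ω|}).toReal
      ≤ (μ ({ω | 2 * M < ∑ i : Fin m, X i ω} ∪ {ω | 2 * M < -∑ i : Fin m, X i ω})).toReal :=
        ENNReal.toReal_mono (measure_ne_top μ _) (measure_mono hunion)
    _ ≤ ((μ {ω | 2 * M < ∑ i : Fin m, X i ω}) + μ {ω | 2 * M < -∑ i : Fin m, X i ω}).toReal :=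
        ENNReal.toReal_mono (by finiteness) (measure_union_le _ _)
    _ = (μ {ω | 2 * M < ∑ i : Fin m, X i ω}).toReal
        + (μ {ω | 2 * M < -∑ i : Fin m, X i ω}).toReal :=
        ENNReal.toReal_add (measure_ne_top μ _) (measure_ne_top μ _)
    _ ≤ 2 * Real.exp (-M / (4 * B)) := by linarith
end

section
/- Let $G$ be a bipartite graph with vertex partition $(A,B)$, $|A|=|B|=n$, and let $X\subseteq A$, $Y\subseteq B$. If for $m\leq n$ we have $m|X|+m|Y|+e_G(A\setminus X,B\setminus Y)\geq mn$ for all $X\subseteq A$ and $Y\subseteq B$, then $G$ has an $m$-factor; conversely, if $G$ has an $m$-factor then the inequality holds for all such $X,Y$. -/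
open Finset
open scoped Classical

variable {V : Type*} [Fintype V] [DecidableEq V]

set_option linter.unusedSectionVars false

lemma eBetween_eq_card (G : SimpleGraph V) (X Y : Finset V) :
    eBetween G X Y = ((X ×ˢ Y).filter fun p => G.Adj p.1 p.2).card := by
  rw [eBetween, Finset.card_filter, Finset.sum_product]
  refine Finset.sum_congr rfl fun x _ => ?_
  rw [Finset.card_filter]

lemma eBetween_comm (G : SimpleGraph V) (X Y : Finset V) :
    eBetween G X Y = ∑ y ∈ Y, (X.filter fun x => G.Adj y x).card := by
  rw [eBetween]
  simp only [Finset.card_filter]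
  rw [Finset.sum_comm]
  refine Finset.sum_congr rfl fun y _ => Finset.sum_congr rfl fun x _ => ?_
  rw [SimpleGraph.adj_comm]

lemma eBetween_mono {K G : SimpleGraph V} (h : K ≤ G) (X Y : Finset V) :
    eBetween K X Y ≤ eBetween G X Y := by
  refine Finset.sum_le_sum fun x _ => Finset.card_le_card ?_
  intro y hy
  simp only [Finset.mem_filter] at *
  exact ⟨hy.1, h hy.2⟩

lemma nbhd_inter (K : SimpleGraph V) (a : V) (B : Finset V) :
    nbhd K a ∩ B = B.filter fun b => K.Adj a b := by
  ext b; simp [nbhd, and_comm]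

lemma forward_dir (G K : SimpleGraph V) (A B : Finset V) (n m : ℕ)
    (hA : A.card = n) (hB : B.card = n)
    (hKG : K ≤ G)
    (hdegA : ∀ a ∈ A, (nbhd K a ∩ B).card = m) (hdegB : ∀ b ∈ B, (nbhd K b ∩ A).card = m)
    (X : Finset V) (hX : X ⊆ A) (Y : Finset V) (hY : Y ⊆ B) :
    m * n ≤ m * X.card + m * Y.card + eBetween G (A \ X) (B \ Y) := by
  have h1 : ∀ a ∈ A, (B.filter fun b => K.Adj a b).card = m := fun a ha => by
    rw [← nbhd_inter]; exact hdegA a ha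
  have h2 : ∀ b ∈ B, (A.filter fun a => K.Adj b a).card = m := fun b hb => by
    rw [← nbhd_inter]; exact hdegB b hb
  -- total count
  have htot : eBetween K A B = m * n := by
    rw [eBetween, Finset.sum_congr rfl h1, Finset.sum_const, hA, smul_eq_mul, mul_comm]
  -- split A
  have hsplit1 : eBetween K A B = eBetween K (A \ X) B + eBetween K X B := by
    rw [eBetween, eBetween, eBetween, ← Finset.sum_sdiff hX]
  have hXB : eBetween K X B = m * X.card := by
    rw [eBetween, Finset.sum_congr rfl fun a ha => h1 a (hX ha), Finset.sum_const,
      smul_eq_mul, mul_comm]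
  -- split B
  have hsplit2 : eBetween K (A \ X) B = eBetween K (A \ X) (B \ Y) + eBetween K (A \ X) Y := by
    rw [eBetween, eBetween, eBetween, ← Finset.sum_add_distrib]
    refine Finset.sum_congr rfl fun a _ => ?_
    rw [← Finset.card_union_of_disjoint, ← Finset.filter_union, Finset.sdiff_union_of_subset hY]
    exact Finset.disjoint_filter_filter (Finset.sdiff_disjoint)
  have hAY : eBetween K (A \ X) Y ≤ m * Y.card := by
    rw [eBetween_comm]
    calc ∑ y ∈ Y, ((A \ X).filter fun x => K.Adj y x).card
        ≤ ∑ y ∈ Y, (A.filter fun x => K.Adj y x).card := by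
          refine Finset.sum_le_sum fun y _ => Finset.card_le_card ?_
          exact Finset.filter_subset_filter _ Finset.sdiff_subset
      _ = m * Y.card := by
          rw [Finset.sum_congr rfl fun y hy => h2 y (hY hy), Finset.sum_const, smul_eq_mul,
            mul_comm]
  have hmono := eBetween_mono hKG (A \ X) (B \ Y)
  omega

/-- The edge set of the bipartite graph, as ordered pairs from `A` to `B`. -/
noncomputable def eSet (G : SimpleGraph V) (A B : Finset V) : Finset (V × V) :=
  (A ×ˢ B).filter fun p => G.Adj p.1 p.2

lemma mem_eSet {G : SimpleGraph V} {A B : Finset V} {p : V × V} :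
    p ∈ eSet G A B ↔ p.1 ∈ A ∧ p.2 ∈ B ∧ G.Adj p.1 p.2 := by
  simp [eSet, and_assoc]

/-- The Hall-system for the gadget reduction of `m`-factors to perfect matchings. -/
noncomputable def hallT (G : SimpleGraph V) (A B : Finset V) (m : ℕ) :
    ((↥A × Fin m) ⊕ ↥(eSet G A B)) → Finset ((↥B × Fin m) ⊕ ↥(eSet G A B))
  | Sum.inl ai =>
      (Finset.univ.filter fun e : ↥(eSet G A B) => (e : V × V).1 = (ai.1 : V)).image Sum.inr
  | Sum.inr e =>
      insert (Sum.inr e)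
        ((Finset.univ.filter fun bj : ↥B × Fin m => (bj.1 : V) = (e : V × V).2).image Sum.inl)

lemma mem_hallT_inl {G : SimpleGraph V} {A B : Finset V} {m : ℕ}
    {ai : ↥A × Fin m} {x : (↥B × Fin m) ⊕ ↥(eSet G A B)} :
    x ∈ hallT G A B m (Sum.inl ai) ↔
      ∃ e : ↥(eSet G A B), (e : V × V).1 = (ai.1 : V) ∧ x = Sum.inr e := by
  simp [hallT, eq_comm]

lemma mem_hallT_inr {G : SimpleGraph V} {A B : Finset V} {m : ℕ}
    {e : ↥(eSet G A B)} {x : (↥B × Fin m) ⊕ ↥(eSet G A B)} :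
    x ∈ hallT G A B m (Sum.inr e) ↔
      x = Sum.inr e ∨ ∃ bj : ↥B × Fin m, (bj.1 : V) = (e : V × V).2 ∧ x = Sum.inl bj := by
  simp [hallT, eq_comm]

lemma card_subtype_filter {γ : Type*} (s : Finset γ) (p : γ → Prop) [DecidablePred p]
    [DecidablePred fun x : ↥s => p ↑x] :
    ((Finset.univ : Finset ↥s).filter fun x : ↥s => p ↑x).card = (s.filter p).card := by
  refine Finset.card_bij (fun x _ => (x : γ)) ?_ ?_ ?_
  · intro x hx
    simp only [Finset.mem_filter] at hx ⊢
    exact ⟨x.2, hx.2⟩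
  · intro x _ y _ h
    exact Subtype.ext h
  · intro y hy
    simp only [Finset.mem_filter] at hy
    exact ⟨⟨y, hy.1⟩, by simp [hy.2], rfl⟩

lemma hall_condition (G : SimpleGraph V) (A B : Finset V) (n m : ℕ)
    (hA : A.card = n) (hB : B.card = n)
    (cond : ∀ X ⊆ A, ∀ Y ⊆ B, m * n ≤ m * X.card + m * Y.card + eBetween G (A \ X) (B \ Y))
    (S : Finset ((↥A × Fin m) ⊕ ↥(eSet G A B))) :
    S.card ≤ (S.biUnion (hallT G A B m)).card := by
  classical
  set S₁ := S.toLeft with hS₁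
  set S₂ := S.toRight with hS₂
  set P : Finset V := S₁.image (fun ai => (ai.1 : V)) with hP
  set Q : Finset V := S₂.image (fun e : ↥(eSet G A B) => (e : V × V).2) with hQ
  have hPA : P ⊆ A := by
    intro a ha
    simp only [hP, Finset.mem_image] at ha
    obtain ⟨ai, -, rfl⟩ := ha
    exact ai.1.2
  have hQB : Q ⊆ B := by
    intro b hb
    simp only [hQ, Finset.mem_image] at hb
    obtain ⟨e, -, rfl⟩ := hb
    exact (mem_eSet.1 e.2).2.1
  -- S₁.card ≤ m * P.card
  have hS1card : S₁.card ≤ m * P.card := by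
    have : S₁.card ≤ (P ×ˢ (Finset.univ : Finset (Fin m))).card := by
      refine Finset.card_le_card_of_injOn (fun ai => ((ai.1 : V), ai.2)) ?_ ?_
      · intro ai hai
        simp only [Finset.mem_product, Finset.mem_univ, and_true]
        exact Finset.mem_coe.2 (Finset.mem_product.2
          ⟨Finset.mem_image_of_mem (fun ai : ↥A × Fin m => (ai.1 : V)) hai, Finset.mem_univ _⟩)
      · intro ai _ aj _ h
        obtain ⟨h1, h2⟩ := Prod.mk.injEq .. ▸ h
        exact Prod.ext (Subtype.ext h1) h2
    simpa [Finset.card_product, mul_comm] using this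
  set N := S.biUnion (hallT G A B m) with hN
  set W₁ : Finset ((↥B × Fin m) ⊕ ↥(eSet G A B)) :=
    (Finset.univ.filter fun e : ↥(eSet G A B) => (e : V × V).1 ∈ P ∧ (e : V × V).2 ∉ Q).image Sum.inr
    with hW₁
  set W₂ : Finset ((↥B × Fin m) ⊕ ↥(eSet G A B)) := S₂.image Sum.inr with hW₂
  set W₃ : Finset ((↥B × Fin m) ⊕ ↥(eSet G A B)) :=
    (Finset.univ.filter fun bj : ↥B × Fin m => (bj.1 : V) ∈ Q).image Sum.inl with hW₃
  have hW₁N : W₁ ⊆ N := by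
    intro x hx
    simp only [hW₁, Finset.mem_image, Finset.mem_filter, Finset.mem_univ, true_and] at hx
    obtain ⟨e, ⟨he1, -⟩, rfl⟩ := hx
    simp only [hP, Finset.mem_image] at he1
    obtain ⟨ai, hai, hai2⟩ := he1
    refine Finset.mem_biUnion.2 ⟨Sum.inl ai, Finset.mem_toLeft.1 hai, ?_⟩
    exact mem_hallT_inl.2 ⟨e, hai2.symm ▸ rfl, rfl⟩
  have hW₂N : W₂ ⊆ N := by
    intro x hx
    simp only [hW₂, Finset.mem_image] at hx
    obtain ⟨e, he, rfl⟩ := hx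
    exact Finset.mem_biUnion.2 ⟨Sum.inr e, Finset.mem_toRight.1 he, mem_hallT_inr.2 (Or.inl rfl)⟩
  have hW₃N : W₃ ⊆ N := by
    intro x hx
    simp only [hW₃, Finset.mem_image, Finset.mem_filter, Finset.mem_univ, true_and] at hx
    obtain ⟨bj, hbj, rfl⟩ := hx
    simp only [hQ, Finset.mem_image] at hbj
    obtain ⟨e, he, he2⟩ := hbj
    refine Finset.mem_biUnion.2 ⟨Sum.inr e, Finset.mem_toRight.1 he, ?_⟩
    exact mem_hallT_inr.2 (Or.inr ⟨bj, he2.symm, rfl⟩)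
  have hd12 : Disjoint W₁ W₂ := by
    rw [Finset.disjoint_left]
    intro x hx1 hx2
    simp only [hW₁, hW₂, Finset.mem_image, Finset.mem_filter, Finset.mem_univ, true_and] at hx1 hx2
    obtain ⟨e, ⟨-, he2⟩, rfl⟩ := hx1
    obtain ⟨e', he', heq⟩ := hx2
    cases Sum.inr_injective heq
    exact he2 (Finset.mem_image_of_mem _ he')
  have hd3 : Disjoint (W₁ ∪ W₂) W₃ := by
    rw [Finset.disjoint_left]
    intro x hx1 hx3
    simp only [hW₁, hW₂, hW₃, Finset.mem_union, Finset.mem_image] at hx1 hx3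
    obtain ⟨bj, -, rfl⟩ := hx3
    rcases hx1 with ⟨e, -, h⟩ | ⟨e, -, h⟩ <;> exact absurd h (by simp)
  have hsub : W₁ ∪ W₂ ∪ W₃ ⊆ N := Finset.union_subset (Finset.union_subset hW₁N hW₂N) hW₃N
  have hcardN : W₁.card + W₂.card + W₃.card ≤ N.card := by
    calc W₁.card + W₂.card + W₃.card
        = (W₁ ∪ W₂).card + W₃.card := by rw [Finset.card_union_of_disjoint hd12]
      _ = (W₁ ∪ W₂ ∪ W₃).card := (Finset.card_union_of_disjoint hd3).symm
      _ ≤ N.card := Finset.card_le_card hsub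
  -- cardinalities of the W's
  have hW₂card : W₂.card = S₂.card := Finset.card_image_of_injective _ Sum.inr_injective
  have hW₁card : W₁.card = eBetween G P (B \ Q) := by
    rw [hW₁, Finset.card_image_of_injective _ Sum.inr_injective]
    have hcs : (Finset.univ.filter fun e : ↥(eSet G A B) => (e : V × V).1 ∈ P ∧ (e : V × V).2 ∉ Q).card
        = ((eSet G A B).filter fun p => p.1 ∈ P ∧ p.2 ∉ Q).card :=
      card_subtype_filter (eSet G A B) (fun p => p.1 ∈ P ∧ p.2 ∉ Q)
    rw [hcs, eBetween_eq_card]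
    congr 1
    ext p
    simp only [Finset.mem_filter, Finset.mem_product, Finset.mem_sdiff, mem_eSet]
    constructor
    · rintro ⟨⟨h1, h2, h3⟩, h4, h5⟩
      exact ⟨⟨h4, h2, h5⟩, h3⟩
    · rintro ⟨⟨h4, h2, h5⟩, h3⟩
      exact ⟨⟨hPA h4, h2, h3⟩, h4, h5⟩
  have hW₃card : W₃.card = m * Q.card := by
    rw [hW₃, Finset.card_image_of_injective _ Sum.inl_injective]
    have : (Finset.univ.filter fun bj : ↥B × Fin m => (bj.1 : V) ∈ Q) =
        (Finset.univ.filter fun b : ↥B => (b : V) ∈ Q) ×ˢ (Finset.univ : Finset (Fin m)) := by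
      ext bj
      simp [Finset.mem_product]
    have h2 : (Finset.univ.filter fun b : ↥B => (b : V) ∈ Q).card
        = (B.filter fun b => b ∈ Q).card := card_subtype_filter B (fun b => b ∈ Q)
    have h3 : B.filter (fun b => b ∈ Q) = Q := by
      rw [Finset.filter_mem_eq_inter]
      exact Finset.inter_eq_right.2 hQB
    rw [this, Finset.card_product, h2, h3, Finset.card_univ, Fintype.card_fin, mul_comm]
  -- main inequality from the condition
  have hPn : P.card ≤ n := hA ▸ Finset.card_le_card hPA
  have key : m * P.card ≤ m * Q.card + eBetween G P (B \ Q) := by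
    have h := cond (A \ P) Finset.sdiff_subset Q hQB
    rw [Finset.sdiff_sdiff_eq_self hPA, Finset.card_sdiff_of_subset hPA, hA] at h
    have hmul : m * (n - P.card) + m * P.card = m * n := by
      rw [← Nat.mul_add, Nat.sub_add_cancel hPn]
    omega
  have hScard : S.card = S₁.card + S₂.card := (Finset.card_toLeft_add_card_toRight (u := S)).symm
  omega

lemma backward_dir (G : SimpleGraph V) (A B : Finset V) (n m : ℕ)
    (hA : A.card = n) (hB : B.card = n) (hdisj : Disjoint A B)
    (cond : ∀ X ⊆ A, ∀ Y ⊆ B, m * n ≤ m * X.card + m * Y.card + eBetween G (A \ X) (B \ Y)) :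
    ∃ K : SimpleGraph V, K ≤ G ∧
      (∀ a ∈ A, ((Finset.univ.filter fun b => K.Adj a b) ∩ B).card = m) ∧
      (∀ b ∈ B, ((Finset.univ.filter fun a => K.Adj b a) ∩ A).card = m) := by
  classical
  obtain ⟨f, finj, hf⟩ :=
    (Finset.all_card_le_biUnion_card_iff_exists_injective (hallT G A B m)).1
      (hall_condition G A B n m hA hB cond)
  have hcard : Fintype.card ((↥A × Fin m) ⊕ ↥(eSet G A B))
      = Fintype.card ((↥B × Fin m) ⊕ ↥(eSet G A B)) := by
    simp [Fintype.card_sum, Fintype.card_prod, Fintype.card_coe, hA, hB]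
  have fbij : Function.Bijective f := (Fintype.bijective_iff_injective_and_card f).2 ⟨finj, hcard⟩
  have fact1 : ∀ ai : ↥A × Fin m, ∃ e : ↥(eSet G A B),
      f (Sum.inl ai) = Sum.inr e ∧ (e : V × V).1 = (ai.1 : V) := by
    intro ai
    obtain ⟨e, he1, he2⟩ := mem_hallT_inl.1 (hf (Sum.inl ai))
    exact ⟨e, he2, he1⟩
  have fact2 : ∀ e : ↥(eSet G A B), f (Sum.inr e) = Sum.inr e ∨
      ∃ bj : ↥B × Fin m, f (Sum.inr e) = Sum.inl bj ∧ (bj.1 : V) = (e : V × V).2 := by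
    intro e
    rcases mem_hallT_inr.1 (hf (Sum.inr e)) with h | ⟨bj, h1, h2⟩
    · exact Or.inl h
    · exact Or.inr ⟨bj, h2, h1⟩
  set K : SimpleGraph V := SimpleGraph.fromRel
    (fun u v => ∃ e : ↥(eSet G A B), (e : V × V) = (u, v) ∧ (f (Sum.inr e)).isLeft) with hK
  have hKadj : ∀ u v, K.Adj u v ↔ u ≠ v ∧
      ((∃ e : ↥(eSet G A B), (e : V × V) = (u, v) ∧ (f (Sum.inr e)).isLeft) ∨
       (∃ e : ↥(eSet G A B), (e : V × V) = (v, u) ∧ (f (Sum.inr e)).isLeft)) := by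
    intro u v; rw [hK]; exact SimpleGraph.fromRel_adj _ u v
  have hKG : K ≤ G := by
    intro u v huv
    rw [hKadj] at huv
    rcases huv.2 with ⟨e, he, -⟩ | ⟨e, he, -⟩
    · have := (mem_eSet.1 e.2).2.2; rw [he] at this; exact this
    · have := (mem_eSet.1 e.2).2.2; rw [he] at this; exact this.symm
  refine ⟨K, hKG, ?_, ?_⟩
  · -- degrees on the A side
    intro a ha
    set Ua : Finset ↥(eSet G A B) :=
      Finset.univ.filter
        (fun e : ↥(eSet G A B) => (e : V × V).1 = a ∧ (f (Sum.inr e)).isLeft) with hUa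
    have himg : (Finset.univ.filter fun b => K.Adj a b) ∩ B
        = Ua.image (fun e : ↥(eSet G A B) => (e : V × V).2) := by
      ext b
      simp only [Finset.mem_inter, Finset.mem_filter, Finset.mem_univ, true_and,
        Finset.mem_image, hUa]
      constructor
      · rintro ⟨hadj, hbB⟩
        rw [hKadj] at hadj
        rcases hadj.2 with ⟨e, he, hu⟩ | ⟨e, he, hu⟩
        · refine ⟨e, ⟨?_, hu⟩, ?_⟩ <;> rw [he]
        · exfalso
          have h2 := (mem_eSet.1 e.2).2.1
          rw [he] at h2
          exact Finset.disjoint_left.1 hdisj ha h2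
      · rintro ⟨e, he, rfl⟩
        have heB := (mem_eSet.1 e.2).2.1
        have hne : a ≠ (e : V × V).2 := fun hcontra =>
          Finset.disjoint_left.1 hdisj ha (hcontra ▸ heB)
        refine ⟨(hKadj _ _).2 ⟨hne, Or.inl ⟨e, ?_, he.2⟩⟩, heB⟩
        exact Prod.ext he.1 rfl
    trans (Ua.image (fun e : ↥(eSet G A B) => (e : V × V).2)).card
    · convert congrArg Finset.card himg
    rw [Finset.card_image_of_injOn]
    swap
    · intro e he e' he' hee
      simp only [hUa, Finset.coe_filter, Set.mem_setOf_eq] at he he'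
      exact Subtype.ext (Prod.ext (he.2.1.trans he'.2.1.symm) hee)
    have hbij : ((Finset.univ : Finset (Fin m))).card = Ua.card := by
      refine Finset.card_bij (fun i _ => (fact1 (⟨a, ha⟩, i)).choose) ?_ ?_ ?_
      · intro i _
        obtain ⟨h1, h2⟩ := (fact1 (⟨a, ha⟩, i)).choose_spec
        simp only [hUa, Finset.mem_filter, Finset.mem_univ, true_and]
        refine ⟨h2, ?_⟩
        rcases fact2 (fact1 (⟨a, ha⟩, i)).choose with h | ⟨bj, hbj, -⟩
        · exfalso
          have heq : f (Sum.inr (fact1 (⟨a, ha⟩, i)).choose) = f (Sum.inl (⟨a, ha⟩, i)) :=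
            h.trans h1.symm
          exact absurd (finj heq) (by simp)
        · rw [hbj]; rfl
      · intro i _ j _ hij
        have h1 := (fact1 (⟨a, ha⟩, i)).choose_spec.1
        have h2 := (fact1 (⟨a, ha⟩, j)).choose_spec.1
        have heq : f (Sum.inl (⟨a, ha⟩, i)) = f (Sum.inl (⟨a, ha⟩, j)) := by
          rw [h1, h2]
          exact congrArg Sum.inr hij
        simpa using finj heq
      · intro e he
        simp only [hUa, Finset.mem_filter, Finset.mem_univ, true_and] at he
        obtain ⟨he1, he2⟩ := he
        obtain ⟨x, hx⟩ := fbij.2 (Sum.inr e)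
        cases x with
        | inr e' =>
            exfalso
            rcases fact2 e' with h | ⟨bj, hbj, -⟩
            · have hee : e' = e := Sum.inr_injective (h.symm.trans hx)
              rw [hee] at h
              rw [h] at he2
              simp at he2
            · rw [hx] at hbj; simp at hbj
        | inl ai =>
            obtain ⟨h1, h2⟩ := (fact1 ai).choose_spec
            have hee : (fact1 ai).choose = e := Sum.inr_injective (h1.symm.trans hx)
            have ha1 : (ai.1 : V) = a := by rw [← h2, hee, he1]
            refine ⟨ai.2, Finset.mem_univ _, ?_⟩
            have hai : ai = (⟨a, ha⟩, ai.2) := Prod.ext (Subtype.ext ha1) rfl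
            exact hai ▸ hee
    rw [← hbij, Finset.card_univ, Fintype.card_fin]
  · -- degrees on the B side
    intro b hb
    set Ub : Finset ↥(eSet G A B) :=
      Finset.univ.filter
        (fun e : ↥(eSet G A B) => (e : V × V).2 = b ∧ (f (Sum.inr e)).isLeft) with hUb
    have himg : (Finset.univ.filter fun v => K.Adj b v) ∩ A
        = Ub.image (fun e : ↥(eSet G A B) => (e : V × V).1) := by
      ext v
      simp only [Finset.mem_inter, Finset.mem_filter, Finset.mem_univ, true_and,
        Finset.mem_image, hUb]
      constructor
      · rintro ⟨hadj, hvA⟩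
        rw [hKadj] at hadj
        rcases hadj.2 with ⟨e, he, hu⟩ | ⟨e, he, hu⟩
        · exfalso
          have h2 := (mem_eSet.1 e.2).1
          rw [he] at h2
          exact Finset.disjoint_left.1 hdisj h2 hb
        · refine ⟨e, ⟨?_, hu⟩, ?_⟩ <;> rw [he]
      · rintro ⟨e, he, rfl⟩
        have heA := (mem_eSet.1 e.2).1
        have hne : b ≠ (e : V × V).1 := fun hcontra =>
          Finset.disjoint_left.1 hdisj (hcontra ▸ heA) hb
        refine ⟨(hKadj _ _).2 ⟨hne, Or.inr ⟨e, ?_, he.2⟩⟩, heA⟩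
        exact Prod.ext rfl he.1
    trans (Ub.image (fun e : ↥(eSet G A B) => (e : V × V).1)).card
    · convert congrArg Finset.card himg
    rw [Finset.card_image_of_injOn]
    swap
    · intro e he e' he' hee
      simp only [hUb, Finset.coe_filter, Set.mem_setOf_eq] at he he'
      exact Subtype.ext (Prod.ext hee (he.2.1.trans he'.2.1.symm))
    have hbij : Ub.card = ((Finset.univ : Finset (Fin m))).card := by
      refine Finset.card_bij
        (fun e he => ((f (Sum.inr e)).getLeft (by
          simp only [hUb, Finset.mem_filter, Finset.mem_univ, true_and] at he
          exact he.2)).2) ?_ ?_ ?_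
      · intro e _; exact Finset.mem_univ _
      · intro e he e' he' heq
        simp only [hUb, Finset.mem_filter, Finset.mem_univ, true_and] at he he'
        rcases fact2 e with h | ⟨bj, hbj, hbj2⟩
        · rw [h] at he; simp at he
        rcases fact2 e' with h' | ⟨bj', hbj', hbj2'⟩
        · rw [h'] at he'; simp at he'
        have hbjb : bj.1 = (⟨b, hb⟩ : ↥B) := Subtype.ext (hbj2.trans he.1)
        have hbjb' : bj'.1 = (⟨b, hb⟩ : ↥B) := Subtype.ext (hbj2'.trans he'.1)
        have hg : bj.2 = bj'.2 := by
          have e1 : (f (Sum.inr e)).getLeft (by rw [hbj]; rfl) = bj :=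
            (Sum.getLeft_eq_iff _).2 hbj
          have e2 : (f (Sum.inr e')).getLeft (by rw [hbj']; rfl) = bj' :=
            (Sum.getLeft_eq_iff _).2 hbj'
          rw [← e1, ← e2]
          exact heq
        have hbjeq : bj = bj' := Prod.ext (hbjb.trans hbjb'.symm) hg
        have : f (Sum.inr e) = f (Sum.inr e') := by rw [hbj, hbj', hbjeq]
        exact Sum.inr_injective (finj this)
      · intro j _
        obtain ⟨x, hx⟩ := fbij.2 (Sum.inl (⟨b, hb⟩, j))
        cases x with
        | inl ai =>
            exfalso
            obtain ⟨e0, h1, -⟩ := fact1 ai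
            rw [hx] at h1
            exact absurd h1 (by simp)
        | inr e =>
            rcases fact2 e with h | ⟨bj, hbj, hbj2⟩
            · rw [hx] at h; exact absurd h (by simp)
            have hbj' : bj = (⟨b, hb⟩, j) := Sum.inl_injective (hbj.symm.trans hx)
            have heUb : e ∈ Ub := by
              simp only [hUb, Finset.mem_filter, Finset.mem_univ, true_and]
              refine ⟨?_, by rw [hbj]; rfl⟩
              rw [← hbj2, hbj']
            refine ⟨e, heUb, ?_⟩
            have hgl : (f (Sum.inr e)).getLeft (by rw [hx]; rfl) = (⟨b, hb⟩, j) :=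
              (Sum.getLeft_eq_iff _).2 hx
            exact congrArg Prod.snd hgl
    rw [hbij, Finset.card_univ, Fintype.card_fin]

/-- The Gale–Ryser/Ore type characterization of `m`-factors in balanced bipartite graphs used in
the paper: a bipartite graph `G` with parts `A, B` of size `n` has a spanning `m`-regular
subgraph if and only if `m|X| + m|Y| + e_G(A \ X, B \ Y) ≥ mn` for all `X ⊆ A` and `Y ⊆ B`. -/
theorem m_factor_characterization (G : SimpleGraph V) (A B : Finset V) (n m : ℕ)
    (hA : A.card = n) (hB : B.card = n) (hdisj : Disjoint A B)
    (hbip : ∀ u v, G.Adj u v → (u ∈ A ∧ v ∈ B) ∨ (u ∈ B ∧ v ∈ A))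
    (hm : m ≤ n) :
    (∃ K : SimpleGraph V, K ≤ G ∧
        (∀ a ∈ A, (nbhd K a ∩ B).card = m) ∧ (∀ b ∈ B, (nbhd K b ∩ A).card = m)) ↔
      (∀ X ⊆ A, ∀ Y ⊆ B, m * n ≤ m * X.card + m * Y.card + eBetween G (A \ X) (B \ Y)) := by
  constructor
  · rintro ⟨K, hKG, hdA, hdB⟩ X hX Y hY
    exact forward_dir G K A B n m hA hB hKG hdA hdB X hX Y hY
  · intro cond
    obtain ⟨K, h1, h2, h3⟩ := backward_dir G A B n m hA hB hdisj cond
    exact ⟨K, h1, fun a ha => h2 a ha, fun b hb => h3 b hb⟩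
end
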